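/- Let G ⊆ K⟨X⟩ be a set of nonzero Q-order compatible polynomials with respect to a fixed monomial order. Let g, g' ∈ G be monic, let a, b, a', b' ∈ ⟨X⟩ be monomials with a·LM(g)·b = a'·LM(g')·b' = m, and suppose the monomial m is compatible with Q. Then the S-polynomial s = a·g·b − a'·g'·b' satisfies σ(m) ⊆ σ(s). -/

import Mathlib

open scoped BigOperators

universe u₁ u₂ u₃ u₄ u₅

/-- A labelled quiver: a directed multigraph with edges labelled in `X`. -/
structure LQuiver (V : Type u₁) (E : Type u₂) (X : Type u₃) where
  src : E → V
  tgt : E → V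
  lab : E → X

namespace LQuiver

variable {V : Type u₁} {E : Type u₂} {X : Type u₃}

/-- Paths in the quiver (possibly empty). -/
inductive Walk (Q : LQuiver V E X) : V → V → Type (max u₁ u₂)
  | nil (v : V) : Walk Q v v
  | cons {u : V} (e : E) (p : Walk Q u (Q.src e)) : Walk Q u (Q.tgt e)

/-- The label of a path, a word in the free monoid `⟨X⟩`. -/
def wlabel (Q : LQuiver V E X) : ∀ {u v : V}, Q.Walk u v → FreeMonoid X
  | _, _, .nil _ => 1
  | _, _, .cons e p => FreeMonoid.of (Q.lab e) * Q.wlabel p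

/-- The signature `σ(m)` of a monomial (word) `m`. -/
def sigW (Q : LQuiver V E X) (m : FreeMonoid X) : Set (V × V) :=
  {p : V × V | ∃ w : Q.Walk p.1 p.2, Q.wlabel w = m}

variable {R : Type u₄} [CommRing R]

/-- The signature `σ(f)` of a noncommutative polynomial `f ∈ R⟨X⟩`. -/
def sig (Q : LQuiver V E X) (f : MonoidAlgebra R (FreeMonoid X)) : Set (V × V) :=
  ⋂ m ∈ f.coeff.support, Q.sigW m

/-- A polynomial is compatible with `Q` if its signature is nonempty. -/
def Compatible (Q : LQuiver V E X) (f : MonoidAlgebra R (FreeMonoid X)) : Prop :=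
  (Q.sig f).Nonempty

/-- The projection `s(f)` of `σ(f)` on sources. -/
def srcSet (Q : LQuiver V E X) (f : MonoidAlgebra R (FreeMonoid X)) : Set V :=
  Prod.fst '' Q.sig f

/-- The projection `t(f)` of `σ(f)` on targets. -/
def tgtSet (Q : LQuiver V E X) (f : MonoidAlgebra R (FreeMonoid X)) : Set V :=
  Prod.snd '' Q.sig f

/-- `f` is a `Q`-consequence of `F`. -/
def QConsequence (Q : LQuiver V E X) (F : Set (MonoidAlgebra R (FreeMonoid X)))
    (f : MonoidAlgebra R (FreeMonoid X)) : Prop :=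
  Q.Compatible f ∧
  ∃ (n : ℕ) (g a b : Fin n → MonoidAlgebra R (FreeMonoid X)),
    (∀ i, g i ∈ F) ∧
    f = ∑ i, a i * g i * b i ∧
    ∀ uv ∈ Q.sig f, ∀ i, ∃ ui vi : V,
      (uv.1, ui) ∈ Q.sig (b i) ∧ (ui, vi) ∈ Q.sig (g i) ∧ (vi, uv.2) ∈ Q.sig (a i)

end LQuiver

/-- The monomial `m` regarded as a polynomial in `R⟨X⟩`. -/
noncomputable def mono (R : Type u₄) [CommRing R] {X : Type u₃} (m : FreeMonoid X) :
    MonoidAlgebra R (FreeMonoid X) :=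
  MonoidAlgebra.single m 1

/-- One rewriting step with divisor monomials selected by `DM`. -/
def RewriteStep {R : Type u₄} [CommRing R] {X : Type u₃}
    (G : Set (MonoidAlgebra R (FreeMonoid X)))
    (DM : MonoidAlgebra R (FreeMonoid X) → Set (FreeMonoid X))
    (f h : MonoidAlgebra R (FreeMonoid X)) : Prop :=
  ∃ g ∈ G, ∃ m ∈ DM g, ∃ a b : FreeMonoid X, ∃ lam : R,
    a * m * b ∈ f.coeff.support ∧ h = f + lam • (mono R a * g * mono R b)

/-- A monomial order: a well-founded linear order compatible with multiplication. -/
def IsMonomialOrder {X : Type u₃} (ord : LinearOrder (FreeMonoid X)) : Prop :=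
  WellFounded ord.lt ∧
    ∀ a b m m' : FreeMonoid X, ord.le m m' → ord.le (a * m * b) (a * m' * b)

/-- The leading monomial of a polynomial w.r.t. a linear order on monomials
(defined as `1` for the zero polynomial). -/
noncomputable def LM {K : Type u₄} [CommRing K] {X : Type u₃}
    (ord : LinearOrder (FreeMonoid X)) (f : MonoidAlgebra K (FreeMonoid X)) : FreeMonoid X :=
  letI := ord
  letI : Decidable (f = 0) := Classical.dec _
  if h : f = 0 then 1 else f.coeff.support.max' (Finsupp.support_nonempty_iff.mpr (mt MonoidAlgebra.coeff_eq_zero.mp h))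

/-- One step of standard polynomial reduction w.r.t. a set `G` and a monomial order. -/
def ReduceStep {K : Type u₄} [Field K] {X : Type u₃} (ord : LinearOrder (FreeMonoid X))
    (G : Set (MonoidAlgebra K (FreeMonoid X)))
    (f h : MonoidAlgebra K (FreeMonoid X)) : Prop :=
  ∃ g ∈ G, g ≠ 0 ∧ ∃ a b : FreeMonoid X,
    a * LM ord g * b ∈ f.coeff.support ∧
    h = f - (f.coeff (a * LM ord g * b) / g.coeff (LM ord g)) • (mono K a * g * mono K b)

/-- `f` is `Q`-order compatible w.r.t. the order `ord`. -/
def QOrderCompatible {V : Type u₁} {E : Type u₂} {X : Type u₃} {K : Type u₄} [CommRing K]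
    (Q : LQuiver V E X) (ord : LinearOrder (FreeMonoid X))
    (f : MonoidAlgebra K (FreeMonoid X)) : Prop :=
  Q.Compatible f ∧ Q.sigW (LM ord f) = Q.sig f

/-- A representation of a labelled quiver. -/
structure QRep (R : Type u₄) [CommRing R] {V : Type u₁} {E : Type u₂} {X : Type u₃}
    (Q : LQuiver V E X) where
  M : V → Type u₅
  [addcg : ∀ v, AddCommGroup (M v)]
  [mod : ∀ v, Module R (M v)]
  φ : (e : E) → M (Q.src e) →ₗ[R] M (Q.tgt e)

attribute [instance] QRep.addcg QRep.mod

namespace QRep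

variable {R : Type u₄} [CommRing R] {V : Type u₁} {E : Type u₂} {X : Type u₃}
  {Q : LQuiver V E X}

/-- The linear map induced by a path. -/
def walkMap (ρ : QRep R Q) : ∀ {u v : V}, Q.Walk u v → (ρ.M u →ₗ[R] ρ.M v)
  | _, _, .nil _ => LinearMap.id
  | _, _, .cons e p => (ρ.φ e).comp (ρ.walkMap p)

/-- The representation is consistent with the labelling: two paths with the same
source, target and label induce the same linear map. -/
def Consistent (ρ : QRep R Q) : Prop :=
  ∀ (u v : V) (p q : Q.Walk u v), Q.wlabel p = Q.wlabel q → ρ.walkMap p = ρ.walkMap q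

/-- The realization `φ_{v,w}(f)` of a polynomial `f` (for a consistent representation and
`(v,w) ∈ σ(f)`, this is the well-defined linear map of the paper). -/
noncomputable def real (ρ : QRep R Q) (v w : V) (f : MonoidAlgebra R (FreeMonoid X)) :
    ρ.M v →ₗ[R] ρ.M w :=
  ∑ m ∈ f.coeff.support, f.coeff m •
    (letI : Decidable (∃ p : Q.Walk v w, Q.wlabel p = m) := Classical.dec _
     if h : ∃ p : Q.Walk v w, Q.wlabel p = m then ρ.walkMap h.choose else 0)

end QRep


section Aux

variable {V : Type u₁} {E : Type u₂} {X : Type u₃}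

/-- Concatenation of walks. -/
def LQuiver.Walk.append {Q : LQuiver V E X} : ∀ {u v w : V}, Q.Walk u v → Q.Walk v w → Q.Walk u w
  | _, _, _, p, .nil _ => p
  | _, _, _, p, .cons e q => .cons e (p.append q)

theorem LQuiver.wlabel_append {Q : LQuiver V E X} : ∀ {u v w : V} (p : Q.Walk u v)
    (q : Q.Walk v w), Q.wlabel (p.append q) = Q.wlabel q * Q.wlabel p
  | _, _, _, _, .nil _ => by simp [LQuiver.Walk.append, LQuiver.wlabel]
  | _, _, _, p, .cons e q => by
    simp [LQuiver.Walk.append, LQuiver.wlabel, LQuiver.wlabel_append p q, mul_assoc]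

/-- A walk whose label factors as `m₁ * m₂` splits accordingly. -/
theorem LQuiver.walk_split {Q : LQuiver V E X} (m₁ : FreeMonoid X) :
    ∀ {u v : V} (p : Q.Walk u v) (m₂ : FreeMonoid X), Q.wlabel p = m₁ * m₂ →
      ∃ (z : V) (p₂ : Q.Walk u z) (p₁ : Q.Walk z v),
        Q.wlabel p₂ = m₂ ∧ Q.wlabel p₁ = m₁ := by
  induction m₁ using FreeMonoid.inductionOn' with
  | one =>
      intro u v p m₂ h
      refine ⟨v, p, .nil v, by simpa using h, ?_⟩
      simp [LQuiver.wlabel]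
  | of_mul x rest ih =>
      intro u v p m₂ h
      rw [mul_assoc] at h
      cases p with
      | nil =>
          exfalso
          rw [show Q.wlabel (.nil u) = 1 from by simp [LQuiver.wlabel]] at h
          have := congrArg FreeMonoid.toList h
          simp at this
      | cons e p' =>
          rw [show Q.wlabel (.cons e p') = FreeMonoid.of (Q.lab e) * Q.wlabel p' from by
            simp [LQuiver.wlabel]] at h
          have h' := congrArg FreeMonoid.toList h
          simp only [FreeMonoid.toList_mul, FreeMonoid.toList_of] at h'
          have hx : Q.lab e = x := by simpa using congrArg List.head? h'
          have ht : Q.wlabel p' = rest * m₂ := FreeMonoid.toList.injective (by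
            simpa using congrArg List.tail h')
          obtain ⟨z, p₂, p₁, h₂, h₁⟩ := ih p' m₂ ht
          refine ⟨z, p₂, .cons e p₁, h₂, ?_⟩
          simp [LQuiver.wlabel, h₁, hx]

/-- Key step: if `uv ∈ σ(a·LM(g)·b)` and `g` is `Q`-order compatible, then
`uv ∈ σ(n)` for any monomial `n` in the support of `a·g·b`. -/
theorem key_step {K : Type u₄} [Field K] (Q : LQuiver V E X)
    (ord : LinearOrder (FreeMonoid X)) (g : MonoidAlgebra K (FreeMonoid X))
    (hqoc : QOrderCompatible Q ord g) (a b : FreeMonoid X) (uv : V × V)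
    (huv : uv ∈ Q.sigW (a * LM ord g * b)) (n : FreeMonoid X)
    (hn : n ∈ (mono K a * g * mono K b).coeff.support) : uv ∈ Q.sigW n := by
  classical
  -- extract `t ∈ supp g` with `n = a * t * b`
  have h1 : (mono K a * g * mono K b).coeff.support ⊆
      Finset.image (· * b) (Finset.image (a * ·) g.coeff.support) := by
    refine (MonoidAlgebra.support_coeff_mul_single_subset _ _ _).trans ?_
    exact Finset.image_subset_image (MonoidAlgebra.support_coeff_single_mul_subset _ _ _)
  obtain ⟨t', ht', rfl⟩ := Finset.mem_image.mp (h1 hn)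
  obtain ⟨t, ht, rfl⟩ := Finset.mem_image.mp ht'
  -- split the walk for `a * LM g * b`
  obtain ⟨u, v⟩ := uv
  obtain ⟨p, hp⟩ := huv
  obtain ⟨z, pb, p', hpb, hp'⟩ := Q.walk_split (a * LM ord g) p b hp
  obtain ⟨y, pL, pa, hpL, hpa⟩ := Q.walk_split a p' (LM ord g) hp'
  -- use order-compatibility of `g`
  have hzy : (z, y) ∈ Q.sigW (LM ord g) := ⟨pL, hpL⟩
  rw [hqoc.2] at hzy
  have hzy' : (z, y) ∈ Q.sigW t := by
    rw [LQuiver.sig] at hzy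
    exact Set.mem_iInter₂.mp hzy t ht
  obtain ⟨q, hq⟩ := hzy'
  refine ⟨pb.append (q.append pa), ?_⟩
  rw [LQuiver.wlabel_append, LQuiver.wlabel_append, hpb, hpa, hq]

end Aux

/-- the signature of a compatible source of an `S`-polynomial of `Q`-order
compatible polynomials is contained in the signature of the `S`-polynomial. -/
theorem sig_source_subset_sig_SPoly {V E X K : Type*} [Field K] (Q : LQuiver V E X)
    (ord : LinearOrder (FreeMonoid X)) (hord : IsMonomialOrder ord)
    (G : Set (MonoidAlgebra K (FreeMonoid X)))
    (hG : ∀ g ∈ G, g ≠ 0 ∧ QOrderCompatible Q ord g)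
    (g g' : MonoidAlgebra K (FreeMonoid X)) (hg : g ∈ G) (hg' : g' ∈ G)
    (hmonic : g.coeff (LM ord g) = 1) (hmonic' : g'.coeff (LM ord g') = 1)
    (a b a' b' m : FreeMonoid X)
    (hm1 : a * LM ord g * b = m) (hm2 : a' * LM ord g' * b' = m)
    (hmc : (Q.sigW m).Nonempty) :
    Q.sigW m ⊆ Q.sig (mono K a * g * mono K b - mono K a' * g' * mono K b') := by
  classical
  intro uv huv
  rw [LQuiver.sig, Set.mem_iInter₂]
  intro n hn
  have hsub := Finsupp.support_sub (f := (mono K a * g * mono K b).coeff)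
    (g := (mono K a' * g' * mono K b').coeff) (by rw [← MonoidAlgebra.coeff_sub]; exact hn)
  rcases Finset.mem_union.mp hsub with h | h
  · exact key_step Q ord g (hG g hg).2 a b uv (by rw [hm1]; exact huv) n h
  · exact key_step Q ord g' (hG g' hg').2 a' b' uv (by rw [hm2]; exact huv) n h
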